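/- arXiv:2603.25824 — 5 statements merged into one kernel-verified Lean document; each statement's English description precedes it below -/
import Mathlib

section
/- Let p be a probability-distribution matrix with coupling polynomial f. Then the sum, over all tuples (x_1,x_2,x_3,y_1,y_2,y_3) ∈ {0,…,m}^6 and (u_1,u_2,u_3,v_1,v_2,v_3) ∈ {0,…,M−1}^6 satisfying x_1+x_2+x_3−y_1−y_2−y_3 = 0 and M ∣ (u_1+u_2+u_3−v_1−v_2−v_3), of the product ∏_{k=1}^{3} p_{x_k,u_k} p_{y_k,v_k}, equals Σ_{M∣b} [f(X,Y)^3 · f(X^{−1},Y^{−1})^3]_{0,b}. Equivalently, when the six pairs (x_k,u_k),(y_k,v_k) are drawn independently with law p, the probability P_6(p) that a cycle-6 candidate with six distinct base-matrix entries satisfies both the partitioning condition and the relocation condition equals Σ_{M∣b} [f^3(X,Y) f^3(X^{−1},Y^{−1})]_{0,b}. -/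
open scoped Classical

/-- The coupling polynomial with exponents scaled by `s`:
`f(X^s, Y^s) = ∑_{i=0}^{m} ∑_{j=0}^{M-1} p_{i,j} X^{s·i} Y^{s·j}`,
as an element of the group algebra of `ℤ × ℤ` over `ℝ` (two-variable real
Laurent polynomials). -/
noncomputable def couplingPoly (m M : ℕ) (p : Fin (m + 1) → Fin M → ℝ) (s : ℤ) :
    AddMonoidAlgebra ℝ (ℤ × ℤ) :=
  ∑ i : Fin (m + 1), ∑ j : Fin M,
    AddMonoidAlgebra.single (s * (i : ℤ), s * (j : ℤ)) (p i j)

section aux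
variable (m M : ℕ) (p : Fin (m + 1) → Fin M → ℝ)

lemma cp_eq (s : ℤ) : couplingPoly m M p s =
    ∑ q : Fin (m+1) × Fin M,
      AddMonoidAlgebra.single (s * (q.1 : ℤ), s * (q.2 : ℤ)) (p q.1 q.2) := by
  rw [couplingPoly, Fintype.sum_prod_type]

lemma cp_pow (s : ℤ) : couplingPoly m M p s ^ 3 =
    ∑ σ : Fin 3 → Fin (m+1) × Fin M,
      AddMonoidAlgebra.single
        (∑ k : Fin 3, (s * ((σ k).1 : ℤ), s * ((σ k).2 : ℤ)))
        (∏ k : Fin 3, p (σ k).1 (σ k).2) := by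
  have : couplingPoly m M p s ^ 3 = ∏ _k : Fin 3, couplingPoly m M p s := by
    simp [Finset.prod_const]
  rw [this]
  simp_rw [cp_eq m M p s]
  rw [Finset.prod_univ_sum, Fintype.piFinset_univ]
  exact Finset.sum_congr rfl fun σ _ => AddMonoidAlgebra.prod_single _ _ _

noncomputable def Eexp (στ : (Fin 3 → Fin (m+1) × Fin M) × (Fin 3 → Fin (m+1) × Fin M)) :
    ℤ × ℤ :=
  ((∑ k : Fin 3, ((στ.1 k).1 : ℤ)) - ∑ k : Fin 3, ((στ.2 k).1 : ℤ),
   (∑ k : Fin 3, ((στ.1 k).2 : ℤ)) - ∑ k : Fin 3, ((στ.2 k).2 : ℤ))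

noncomputable def Wgt (στ : (Fin 3 → Fin (m+1) × Fin M) × (Fin 3 → Fin (m+1) × Fin M)) :
    ℝ :=
  (∏ k : Fin 3, p (στ.1 k).1 (στ.1 k).2) * ∏ k : Fin 3, p (στ.2 k).1 (στ.2 k).2

lemma prod_expand :
    couplingPoly m M p 1 ^ 3 * couplingPoly m M p (-1) ^ 3 =
    ∑ στ : (Fin 3 → Fin (m+1) × Fin M) × (Fin 3 → Fin (m+1) × Fin M),
      AddMonoidAlgebra.single (Eexp m M στ) (Wgt m M p στ) := by
  rw [cp_pow, cp_pow, Finset.sum_mul_sum, Fintype.sum_prod_type]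
  refine Finset.sum_congr rfl fun σ _ => Finset.sum_congr rfl fun τ _ => ?_
  rw [AddMonoidAlgebra.single_mul_single]
  congr 1
  refine Prod.ext ?_ ?_ <;>
    simp [Eexp, Prod.fst_sum, Prod.snd_sum, Finset.sum_neg_distrib, sub_eq_add_neg]

lemma coeff_eq (b : ℤ) :
    (couplingPoly m M p 1 ^ 3 * couplingPoly m M p (-1) ^ 3).coeff (0, b) =
    ∑ στ : (Fin 3 → Fin (m+1) × Fin M) × (Fin 3 → Fin (m+1) × Fin M),
      if Eexp m M στ = (0, b) then Wgt m M p στ else 0 := by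
  rw [prod_expand]
  rw [AddMonoidAlgebra.coeff_sum, Finset.sum_apply']
  exact Finset.sum_congr rfl fun στ _ => Finsupp.single_apply

end aux

/-- For a probability-distribution matrix `p` with coupling
polynomial `f`, the sum over all tuples
`(x₁,x₂,x₃,y₁,y₂,y₃) ∈ {0,…,m}⁶`, `(u₁,u₂,u₃,v₁,v₂,v₃) ∈ {0,…,M−1}⁶`
with `x₁+x₂+x₃−y₁−y₂−y₃ = 0` and `M ∣ (u₁+u₂+u₃−v₁−v₂−v₃)`, of
`∏ₖ p_{xₖ,uₖ} p_{yₖ,vₖ}`, equals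
`Σ_{M∣b} [f(X,Y)³ · f(X⁻¹,Y⁻¹)³]_{0,b}`. -/
theorem cycle6_activeness_probability (m M : ℕ) (hM : 1 ≤ M)
    (p : Fin (m + 1) → Fin M → ℝ)
    (hp : ∀ i j, 0 ≤ p i j)
    (hsum : ∑ i : Fin (m + 1), ∑ j : Fin M, p i j = 1) :
    (∑ t ∈ Finset.univ.filter
        (fun t : (Fin 3 → Fin (m + 1)) × (Fin 3 → Fin (m + 1)) ×
                 (Fin 3 → Fin M) × (Fin 3 → Fin M) =>
          (∑ k : Fin 3, ((t.1 k : ℤ) - (t.2.1 k : ℤ))) = 0 ∧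
          (M : ℤ) ∣ ∑ k : Fin 3, ((t.2.2.1 k : ℤ) - (t.2.2.2 k : ℤ))),
        ∏ k : Fin 3, p (t.1 k) (t.2.2.1 k) * p (t.2.1 k) (t.2.2.2 k)) =
    ∑ᶠ b ∈ {b : ℤ | (M : ℤ) ∣ b},
      (couplingPoly m M p 1 ^ 3 * couplingPoly m M p (-1) ^ 3).coeff (0, b) := by
  classical
  set h : ℤ → ℝ := fun b =>
    ∑ στ : (Fin 3 → Fin (m+1) × Fin M) × (Fin 3 → Fin (m+1) × Fin M),
      if Eexp m M στ = (0, b) then Wgt m M p στ else 0 with hh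
  have hcoeff : ∀ b : ℤ,
      (couplingPoly m M p 1 ^ 3 * couplingPoly m M p (-1) ^ 3).coeff (0, b) = h b :=
    fun b => coeff_eq m M p b
  set t : Finset ℤ :=
    (Finset.univ.image
      (fun στ : (Fin 3 → Fin (m+1) × Fin M) × (Fin 3 → Fin (m+1) × Fin M) =>
        (Eexp m M στ).2)).filter (fun b => (M : ℤ) ∣ b) with ht
  have hsupp : Function.support h ⊆
      ↑(Finset.univ.image
        (fun στ : (Fin 3 → Fin (m+1) × Fin M) × (Fin 3 → Fin (m+1) × Fin M) =>
          (Eexp m M στ).2)) := by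
    intro b hb
    obtain ⟨στ, -, hne⟩ := Finset.exists_ne_zero_of_sum_ne_zero hb
    by_cases hE : Eexp m M στ = (0, b)
    · have : (Eexp m M στ).2 = b := congrArg Prod.snd hE
      simp only [Finset.coe_image, Set.mem_image, Finset.mem_coe, Finset.coe_univ,
        Set.image_univ, Set.mem_range]
      exact ⟨στ, this⟩
    · simp [hE] at hne
  have hinter : {b : ℤ | (M : ℤ) ∣ b} ∩ Function.support h =
      ↑t ∩ Function.support h := by
    ext b
    simp only [ht, Finset.coe_filter, Set.mem_inter_iff, Set.mem_setOf_eq,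
      Set.mem_sep_iff, Finset.mem_coe, Finset.mem_image, Finset.mem_univ, true_and]
    constructor
    · rintro ⟨hd, hs⟩
      have := hsupp hs
      simp only [Finset.coe_image, Finset.coe_univ, Set.image_univ,
        Set.mem_range] at this
      exact ⟨⟨this, hd⟩, hs⟩
    · rintro ⟨⟨-, hd⟩, hs⟩; exact ⟨hd, hs⟩
  have key : ∀ στ : (Fin 3 → Fin (m+1) × Fin M) × (Fin 3 → Fin (m+1) × Fin M),
      (∑ b ∈ t, if Eexp m M στ = (0, b) then Wgt m M p στ else 0) =
      if (Eexp m M στ).1 = 0 ∧ (M : ℤ) ∣ (Eexp m M στ).2 then Wgt m M p στ else 0 := by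
    intro στ
    simp_rw [Prod.ext_iff]
    by_cases h1 : (Eexp m M στ).1 = 0
    · simp only [h1, true_and]
      rw [Finset.sum_ite_eq t ((Eexp m M στ).2) (fun _ => Wgt m M p στ)]
      have : (Eexp m M στ).2 ∈ t ↔ (M : ℤ) ∣ (Eexp m M στ).2 := by
        constructor
        · intro hmem; exact (Finset.mem_filter.mp hmem).2
        · intro hd
          exact Finset.mem_filter.mpr
            ⟨Finset.mem_image.mpr ⟨στ, Finset.mem_univ _, rfl⟩, hd⟩
      simp [this]
    · simp [h1]
  calc
    (∑ x ∈ Finset.univ.filter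
        (fun t : (Fin 3 → Fin (m + 1)) × (Fin 3 → Fin (m + 1)) ×
                 (Fin 3 → Fin M) × (Fin 3 → Fin M) =>
          (∑ k : Fin 3, ((t.1 k : ℤ) - (t.2.1 k : ℤ))) = 0 ∧
          (M : ℤ) ∣ ∑ k : Fin 3, ((t.2.2.1 k : ℤ) - (t.2.2.2 k : ℤ))),
        ∏ k : Fin 3, p (x.1 k) (x.2.2.1 k) * p (x.2.1 k) (x.2.2.2 k))
      = ∑ στ : (Fin 3 → Fin (m+1) × Fin M) × (Fin 3 → Fin (m+1) × Fin M),
          if (Eexp m M στ).1 = 0 ∧ (M : ℤ) ∣ (Eexp m M στ).2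
          then Wgt m M p στ else 0 := by
        rw [Finset.sum_filter]
        refine Fintype.sum_equiv
          ⟨fun x => (fun k => (x.1 k, x.2.2.1 k), fun k => (x.2.1 k, x.2.2.2 k)),
           fun στ => (fun k => (στ.1 k).1, fun k => (στ.2 k).1,
             fun k => (στ.1 k).2, fun k => (στ.2 k).2),
           fun x => rfl, fun στ => rfl⟩ _ _ fun x => ?_
        simp only [Equiv.coe_fn_mk, Eexp, Wgt, Finset.sum_sub_distrib,
          Finset.prod_mul_distrib]
    _ = ∑ b ∈ t, h b := by
        rw [hh, Finset.sum_comm]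
        exact (Finset.sum_congr rfl fun στ _ => key στ).symm
    _ = ∑ᶠ b ∈ {b : ℤ | (M : ℤ) ∣ b},
          (couplingPoly m M p 1 ^ 3 * couplingPoly m M p (-1) ^ 3).coeff (0, b) := by
        simp_rw [hcoeff]
        exact (finsum_mem_eq_sum_of_inter_support_eq h hinter).symm
end

section
/- Let p be a probability-distribution matrix with coupling polynomial f and let g ≥ 1. Then the sum, over all tuples x, y ∈ {0,…,m}^g and u, v ∈ {0,…,M−1}^g satisfying Σ_{k=1}^{g}(x_k − y_k) = 0 and M ∣ Σ_{k=1}^{g}(u_k − v_k), of the product ∏_{k=1}^{g} p_{x_k,u_k} p_{y_k,v_k}, equals Σ_{M∣b}[f(X,Y)^g · f(X^{−1},Y^{−1})^g]_{0,b}. In probabilistic terms: if the 2g pairs are drawn independently with law p, this is the probability that a cycle-2g candidate all of whose 2g base-matrix entries are distinct satisfies both the partitioning condition (alternating sum of partition values equal to zero) and the relocation condition (alternating sum of relocation values divisible by M); the case g = 4 gives the term with weight w_4 in the paper's cycle-8 expectation formula. -/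
open scoped Classical

lemma couplingPoly_pow_expand (m M : ℕ) (p : Fin (m + 1) → Fin M → ℝ) (s : ℤ) (g : ℕ) :
    (∑ i : Fin (m + 1), ∑ j : Fin M,
      AddMonoidAlgebra.single (s * (i : ℤ), s * (j : ℤ)) (p i j)) ^ g =
    ∑ x : Fin g → Fin (m + 1) × Fin M,
      AddMonoidAlgebra.single (s * ∑ k, ((x k).1 : ℤ), s * ∑ k, ((x k).2 : ℤ))
        (∏ k, p (x k).1 (x k).2) := by
  have h1 : (∑ i : Fin (m + 1), ∑ j : Fin M,
      AddMonoidAlgebra.single (s * (i : ℤ), s * (j : ℤ)) (p i j)) =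
      ∑ a : Fin (m+1) × Fin M,
        AddMonoidAlgebra.single (s * (a.1 : ℤ), s * (a.2 : ℤ)) (p a.1 a.2) :=
    (Fintype.sum_prod_type (f := fun a : Fin (m+1) × Fin M =>
      AddMonoidAlgebra.single ((s * (a.1 : ℤ), s * (a.2 : ℤ)) : ℤ × ℤ) (p a.1 a.2))).symm
  rw [h1]
  rw [show (∑ a : Fin (m+1) × Fin M,
      AddMonoidAlgebra.single ((s * (a.1 : ℤ), s * (a.2 : ℤ)) : ℤ × ℤ) (p a.1 a.2)) ^ g
    = ∏ _k : Fin g, ∑ a : Fin (m+1) × Fin M,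
      AddMonoidAlgebra.single ((s * (a.1 : ℤ), s * (a.2 : ℤ)) : ℤ × ℤ) (p a.1 a.2) by
      simp [Finset.prod_const]]
  rw [Finset.prod_univ_sum]
  rw [Fintype.piFinset_univ]
  refine Finset.sum_congr rfl fun x _ => ?_
  rw [AddMonoidAlgebra.prod_single]
  congr 1
  rw [Prod.ext_iff]
  constructor
  · simp [Prod.fst_sum, Finset.mul_sum]
  · simp [Prod.snd_sum, Finset.mul_sum]

/-- For a probability-distribution matrix `p` with coupling
polynomial `f` and any `g ≥ 1`, the sum over all tuples
`x, y ∈ {0,…,m}^g`, `u, v ∈ {0,…,M−1}^g` satisfying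
`Σₖ (xₖ − yₖ) = 0` and `M ∣ Σₖ (uₖ − vₖ)`, of `∏ₖ p_{xₖ,uₖ} p_{yₖ,vₖ}`,
equals `Σ_{M∣b}[f(X,Y)^g · f(X⁻¹,Y⁻¹)^g]_{0,b}`.  This is the probability
that a cycle-2g candidate with `2g` distinct base-matrix entries satisfies
both the partitioning and the relocation conditions. -/
theorem cycle2g_activeness_probability (m M : ℕ) (hM : 1 ≤ M) (g : ℕ) (hg : 1 ≤ g)
    (p : Fin (m + 1) → Fin M → ℝ)
    (hp : ∀ i j, 0 ≤ p i j)
    (hsum : ∑ i : Fin (m + 1), ∑ j : Fin M, p i j = 1) :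
    (∑ t ∈ Finset.univ.filter
        (fun t : (Fin g → Fin (m + 1)) × (Fin g → Fin (m + 1)) ×
                 (Fin g → Fin M) × (Fin g → Fin M) =>
          (∑ k : Fin g, ((t.1 k : ℤ) - (t.2.1 k : ℤ))) = 0 ∧
          (M : ℤ) ∣ ∑ k : Fin g, ((t.2.2.1 k : ℤ) - (t.2.2.2 k : ℤ))),
        ∏ k : Fin g, p (t.1 k) (t.2.2.1 k) * p (t.2.1 k) (t.2.2.2 k)) =
    ∑ᶠ b ∈ {b : ℤ | (M : ℤ) ∣ b},
      (couplingPoly m M p 1 ^ g * couplingPoly m M p (-1) ^ g).coeff (0, b) := by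
  simp only [couplingPoly]
  set T := Fin g → Fin (m + 1) × Fin M
  set E₁ : T × T → ℤ := fun XY =>
    (∑ k, ((XY.1 k).1 : ℤ)) - ∑ k, ((XY.2 k).1 : ℤ) with hE₁
  set E₂ : T × T → ℤ := fun XY =>
    (∑ k, ((XY.1 k).2 : ℤ)) - ∑ k, ((XY.2 k).2 : ℤ) with hE₂
  set c : T × T → ℝ := fun XY =>
    (∏ k, p (XY.1 k).1 (XY.1 k).2) * ∏ k, p (XY.2 k).1 (XY.2 k).2 with hc
  -- expansion of the product
  have hF : (∑ i : Fin (m + 1), ∑ j : Fin M,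
        AddMonoidAlgebra.single ((1:ℤ) * (i : ℤ), (1:ℤ) * (j : ℤ)) (p i j)) ^ g *
       (∑ i : Fin (m + 1), ∑ j : Fin M,
        AddMonoidAlgebra.single ((-1:ℤ) * (i : ℤ), (-1:ℤ) * (j : ℤ)) (p i j)) ^ g =
      ∑ XY : T × T, AddMonoidAlgebra.single ((E₁ XY, E₂ XY) : ℤ × ℤ) (c XY) := by
    rw [couplingPoly_pow_expand, couplingPoly_pow_expand, Finset.sum_mul_sum,
      ← Fintype.sum_prod_type']
    refine Finset.sum_congr rfl fun XY _ => ?_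
    rw [AddMonoidAlgebra.single_mul_single]
    congr 1
    simp [hE₁, hE₂, Prod.ext_iff, sub_eq_add_neg]
  -- coefficient extraction
  have happ : ∀ b : ℤ,
      ((∑ XY : T × T, AddMonoidAlgebra.single ((E₁ XY, E₂ XY) : ℤ × ℤ) (c XY)).coeff (0, b))
      = ∑ XY : T × T, if ((E₁ XY, E₂ XY) : ℤ × ℤ) = (0, b) then c XY else 0 := by
    intro b
    rw [AddMonoidAlgebra.coeff_sum, Finsupp.finset_sum_apply]
    exact Finset.sum_congr rfl fun XY _ => AddMonoidAlgebra.coeff_single_apply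
  -- bound on E₂
  have hbound : ∀ XY : T × T, E₂ XY ∈ Finset.Icc (-(M * g : ℤ)) (M * g) := by
    intro XY
    have h1 : ∀ (x : T), (0:ℤ) ≤ ∑ k, ((x k).2 : ℤ) :=
      fun x => Finset.sum_nonneg fun k _ => by positivity
    have h2 : ∀ (x : T), (∑ k, ((x k).2 : ℤ)) ≤ M * g := by
      intro x
      calc (∑ k, ((x k).2 : ℤ)) ≤ ∑ _k : Fin g, (M : ℤ) :=
            Finset.sum_le_sum fun k _ => le_of_lt (by exact_mod_cast (x k).2.isLt)
        _ = M * g := by simp [mul_comm]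
    simp only [Finset.mem_Icc, hE₂]
    constructor
    · have := h1 XY.1; have := h2 XY.2; linarith
    · have := h2 XY.1; have := h1 XY.2; linarith
  set t : Finset ℤ :=
    (Finset.Icc (-(M * g : ℤ)) (M * g)).filter (fun b => (M : ℤ) ∣ b) with ht
  rw [hF]
  have hsupp : ∀ b : ℤ,
      ((∑ XY : T × T, AddMonoidAlgebra.single ((E₁ XY, E₂ XY) : ℤ × ℤ) (c XY)).coeff (0, b)) ≠ 0
      → b ∈ Finset.Icc (-(M * g : ℤ)) (M * g) := by
    intro b hb
    rw [happ] at hb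
    obtain ⟨XY, -, hXY⟩ := Finset.exists_ne_zero_of_sum_ne_zero hb
    have : ((E₁ XY, E₂ XY) : ℤ × ℤ) = (0, b) := by
      by_contra h; simp [h] at hXY
    have : E₂ XY = b := (Prod.mk.injEq _ _ _ _ ▸ this).2
    exact this ▸ hbound XY
  rw [finsum_mem_eq_sum_of_inter_support_eq _ (t := t) (by
    ext b
    simp only [Set.mem_inter_iff, Set.mem_setOf_eq, Function.mem_support,
      Finset.coe_filter, ht, Finset.mem_Icc, Set.mem_setOf_eq]
    constructor
    · rintro ⟨h1, h2⟩
      exact ⟨⟨by simpa using hsupp b h2, h1⟩, h2⟩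
    · rintro ⟨⟨-, h1⟩, h2⟩; exact ⟨h1, h2⟩)]
  -- swap sums
  have : ∑ b ∈ t,
      ((∑ XY : T × T, AddMonoidAlgebra.single ((E₁ XY, E₂ XY) : ℤ × ℤ) (c XY)).coeff (0, b))
      = ∑ XY : T × T, if E₁ XY = 0 ∧ (M : ℤ) ∣ E₂ XY then c XY else 0 := by
    simp only [happ]
    rw [Finset.sum_comm]
    refine Finset.sum_congr rfl fun XY _ => ?_
    have : ∀ b : ℤ, (if ((E₁ XY, E₂ XY) : ℤ × ℤ) = (0, b) then c XY else 0)
        = if E₁ XY = 0 then (if E₂ XY = b then c XY else 0) else 0 := by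
      intro b
      by_cases h1 : E₁ XY = 0 <;> by_cases h2 : E₂ XY = b <;>
        simp [Prod.ext_iff, h1, h2]
    simp only [this]
    by_cases h1 : E₁ XY = 0
    · simp only [h1, if_true]
      rw [Finset.sum_ite_eq t (E₂ XY) (fun _ => c XY)]
      have hmem : E₂ XY ∈ t ↔ (M : ℤ) ∣ E₂ XY := by
        simp [ht, hbound XY]
      by_cases h2 : (M : ℤ) ∣ E₂ XY <;> simp [hmem, h1, h2]
    · simp [h1]
  rw [this]
  -- reindex
  rw [Finset.sum_filter]
  refine Fintype.sum_equiv
    ⟨fun q => (fun k => (q.1 k, q.2.2.1 k), fun k => (q.2.1 k, q.2.2.2 k)),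
     fun XY => (fun k => (XY.1 k).1, fun k => (XY.2 k).1, fun k => (XY.1 k).2,
       fun k => (XY.2 k).2),
     fun q => rfl, fun XY => rfl⟩ _ _ (fun q => ?_)
  simp only [Equiv.coe_fn_mk, hE₁, hE₂, hc]
  have e1 : (∑ k : Fin g, ((q.1 k : ℤ) - (q.2.1 k : ℤ)))
      = (∑ k, (q.1 k : ℤ)) - ∑ k, (q.2.1 k : ℤ) := Finset.sum_sub_distrib _ _
  have e2 : (∑ k : Fin g, ((q.2.2.1 k : ℤ) - (q.2.2.2 k : ℤ)))
      = (∑ k, (q.2.2.1 k : ℤ)) - ∑ k, (q.2.2.2 k : ℤ) := Finset.sum_sub_distrib _ _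
  rw [e1, e2, Finset.prod_mul_distrib]
end

section
/- Let p be a probability-distribution matrix with coupling polynomial f. Consider six independent entry-pairs (x_0,u_0), (x_1,u_1), …, (x_5,u_5), each valued in {0,…,m}×{0,…,M−1}. Then the sum, over all such tuples satisfying 2x_0 − 2x_1 + x_2 + x_3 − x_4 − x_5 = 0 and M ∣ (2u_0 − 2u_1 + u_2 + u_3 − u_4 − u_5), of the product ∏_{e=0}^{5} p_{x_e,u_e}, equals Σ_{M∣b}[f(X^2,Y^2) · f(X^{−2},Y^{−2}) · f(X,Y)^2 · f(X^{−1},Y^{−1})^2]_{0,b}. In probabilistic terms this is the activeness probability of a cycle-8 candidate that traverses one entry twice with positive sign and one entry twice with negative sign (the w_2 pattern of the paper's cycle-8 expectation formula). -/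
open scoped Classical

/-- For six independent entry-pairs
`(x₀,u₀), …, (x₅,u₅)` each with law `p`, the sum over all tuples with
`2x₀ − 2x₁ + x₂ + x₃ − x₄ − x₅ = 0` and
`M ∣ (2u₀ − 2u₁ + u₂ + u₃ − u₄ − u₅)`, of `∏ₑ p_{xₑ,uₑ}`, equals
`Σ_{M∣b}[f(X²,Y²) · f(X⁻²,Y⁻²) · f(X,Y)² · f(X⁻¹,Y⁻¹)²]_{0,b}`
(the `w₂` cycle-8 pattern: one entry traversed twice with positive sign and
one entry traversed twice with negative sign). -/
theorem cycle8_pattern_w2_activeness_probability (m M : ℕ) (hM : 1 ≤ M)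
    (p : Fin (m + 1) → Fin M → ℝ)
    (hp : ∀ i j, 0 ≤ p i j)
    (hsum : ∑ i : Fin (m + 1), ∑ j : Fin M, p i j = 1) :
    (∑ t ∈ Finset.univ.filter
        (fun t : Fin 6 → Fin (m + 1) × Fin M =>
          2 * ((t 0).1 : ℤ) - 2 * ((t 1).1 : ℤ) + ((t 2).1 : ℤ) + ((t 3).1 : ℤ)
            - ((t 4).1 : ℤ) - ((t 5).1 : ℤ) = 0 ∧
          (M : ℤ) ∣ (2 * ((t 0).2 : ℤ) - 2 * ((t 1).2 : ℤ) + ((t 2).2 : ℤ)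
            + ((t 3).2 : ℤ) - ((t 4).2 : ℤ) - ((t 5).2 : ℤ))),
        ∏ e : Fin 6, p (t e).1 (t e).2) =
    ∑ᶠ b ∈ {b : ℤ | (M : ℤ) ∣ b},
      (couplingPoly m M p 2 * couplingPoly m M p (-2) *
        couplingPoly m M p 1 ^ 2 * couplingPoly m M p (-1) ^ 2).coeff (0, b) := by
  classical
  set s : Fin 6 → ℤ := ![2, -2, 1, 1, -1, -1] with hs
  set c : (Fin 6 → Fin (m + 1) × Fin M) → ℝ := fun t => ∏ e, p (t e).1 (t e).2 with hc
  set E : (Fin 6 → Fin (m + 1) × Fin M) → ℤ × ℤ :=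
    fun t => (∑ e, s e * ((t e).1 : ℤ), ∑ e, s e * ((t e).2 : ℤ)) with hE
  set P : AddMonoidAlgebra ℝ (ℤ × ℤ) :=
    couplingPoly m M p 2 * couplingPoly m M p (-2) *
      couplingPoly m M p 1 ^ 2 * couplingPoly m M p (-1) ^ 2 with hPdef
  have hcp : ∀ σ : ℤ, couplingPoly m M p σ =
      ∑ q : Fin (m + 1) × Fin M,
        AddMonoidAlgebra.single (σ * (q.1 : ℤ), σ * (q.2 : ℤ)) (p q.1 q.2) := by
    intro σ
    rw [couplingPoly, Fintype.sum_prod_type]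
  have hP : P = ∑ t : Fin 6 → Fin (m + 1) × Fin M,
      AddMonoidAlgebra.single (E t) (c t) := by
    have h1 : P = ∏ e : Fin 6, couplingPoly m M p (s e) := by
      rw [Fin.prod_univ_six, hPdef]
      have e0 : s 0 = 2 := rfl
      have e1 : s 1 = -2 := rfl
      have e2 : s 2 = 1 := rfl
      have e3 : s 3 = 1 := rfl
      have e4 : s 4 = -1 := rfl
      have e5 : s 5 = -1 := rfl
      rw [e0, e1, e2, e3, e4, e5]
      ring
    rw [h1]
    simp_rw [hcp]
    rw [Finset.prod_univ_sum]
    rw [Fintype.piFinset_univ]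
    refine Finset.sum_congr rfl fun t _ => ?_
    rw [AddMonoidAlgebra.prod_single]
    congr 1
  have hco : ∀ z : ℤ × ℤ, P.coeff z = ∑ t : Fin 6 → Fin (m + 1) × Fin M,
      (if E t = z then c t else 0) := by
    intro z
    rw [hP, AddMonoidAlgebra.coeff_sum, Finsupp.finset_sum_apply]
    refine Finset.sum_congr rfl fun t _ => ?_
    rw [AddMonoidAlgebra.coeff_single, Finsupp.single_apply]
  -- the finite set of relevant `b`
  set B : Finset ℤ :=
    (Finset.univ.image (fun t : Fin 6 → Fin (m + 1) × Fin M => (E t).2)).filter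
      (fun b => (M : ℤ) ∣ b) with hB
  have hfs : ∑ᶠ b ∈ {b : ℤ | (M : ℤ) ∣ b}, P.coeff (0, b) = ∑ b ∈ B, P.coeff (0, b) := by
    refine finsum_mem_eq_sum_of_inter_support_eq _ ?_
    ext b
    simp only [Set.mem_inter_iff, Set.mem_setOf_eq, Function.mem_support, Finset.coe_filter,
      Finset.mem_coe, hB, Finset.coe_sort_coe, Set.mem_setOf_eq, Finset.mem_filter,
      Finset.mem_image, Finset.mem_univ, true_and]
    constructor
    · rintro ⟨hdvd, hne⟩
      refine ⟨⟨?_, hdvd⟩, hne⟩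
      rw [hco] at hne
      obtain ⟨t, -, ht⟩ := Finset.exists_ne_zero_of_sum_ne_zero hne
      by_cases h : E t = (0, b)
      · exact ⟨t, congrArg Prod.snd h⟩
      · simp [h] at ht
    · rintro ⟨⟨-, hdvd⟩, hne⟩
      exact ⟨hdvd, hne⟩
  rw [hfs]
  simp_rw [hco]
  rw [Finset.sum_comm]
  rw [Finset.sum_filter]
  refine Finset.sum_congr rfl fun t _ => ?_
  have hEt1 : (E t).1 = 2 * ((t 0).1 : ℤ) - 2 * ((t 1).1 : ℤ) + ((t 2).1 : ℤ) + ((t 3).1 : ℤ)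
      - ((t 4).1 : ℤ) - ((t 5).1 : ℤ) := by
    have e0 : s 0 = 2 := rfl
    have e1 : s 1 = -2 := rfl
    have e2 : s 2 = 1 := rfl
    have e3 : s 3 = 1 := rfl
    have e4 : s 4 = -1 := rfl
    have e5 : s 5 = -1 := rfl
    simp only [hE, Fin.sum_univ_six, e0, e1, e2, e3, e4, e5]
    ring
  have hEt2 : (E t).2 = 2 * ((t 0).2 : ℤ) - 2 * ((t 1).2 : ℤ) + ((t 2).2 : ℤ) + ((t 3).2 : ℤ)
      - ((t 4).2 : ℤ) - ((t 5).2 : ℤ) := by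
    have e0 : s 0 = 2 := rfl
    have e1 : s 1 = -2 := rfl
    have e2 : s 2 = 1 := rfl
    have e3 : s 3 = 1 := rfl
    have e4 : s 4 = -1 := rfl
    have e5 : s 5 = -1 := rfl
    simp only [hE, Fin.sum_univ_six, e0, e1, e2, e3, e4, e5]
    ring
  have key : ∑ b ∈ B, (if E t = (0, b) then c t else 0)
      = if (E t).1 = 0 ∧ (M : ℤ) ∣ (E t).2 then c t else 0 := by
    by_cases h1 : (E t).1 = 0
    · by_cases h2 : (M : ℤ) ∣ (E t).2
      · have hmem : (E t).2 ∈ B := by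
          simp only [hB, Finset.mem_filter, Finset.mem_image, Finset.mem_univ, true_and]
          exact ⟨⟨t, rfl⟩, h2⟩
        rw [if_pos ⟨h1, h2⟩]
        rw [Finset.sum_eq_single ((E t).2)]
        · rw [if_pos]
          exact Prod.ext h1 rfl
        · intro b hb hbne
          rw [if_neg]
          intro hcon
          exact hbne (congrArg Prod.snd hcon).symm
        · intro h; exact absurd hmem h
      · rw [if_neg (by tauto)]
        refine Finset.sum_eq_zero fun b hb => ?_
        rw [if_neg]
        intro hcon
        have : b = (E t).2 := (congrArg Prod.snd hcon).symm
        rw [hB, Finset.mem_filter] at hb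
        exact h2 (this ▸ hb.2)
    · rw [if_neg (by tauto)]
      refine Finset.sum_eq_zero fun b hb => ?_
      rw [if_neg]
      intro hcon
      exact h1 (congrArg Prod.fst hcon)
  rw [key, hEt1, hEt2]
end

section
/- Let p be a probability-distribution matrix with coupling polynomial f. Consider seven independent entry-pairs (x_0,u_0), (x_1,u_1), …, (x_6,u_6), each valued in {0,…,m}×{0,…,M−1}. Then the sum, over all such tuples satisfying 2x_0 + x_1 + x_2 − x_3 − x_4 − x_5 − x_6 = 0 and M ∣ (2u_0 + u_1 + u_2 − u_3 − u_4 − u_5 − u_6), of the product ∏_{e=0}^{6} p_{x_e,u_e}, equals Σ_{M∣b}[f(X^2,Y^2) · f(X,Y)^2 · f(X^{−1},Y^{−1})^4]_{0,b}. In probabilistic terms this is the activeness probability of a cycle-8 candidate that traverses exactly one entry twice, both times with positive sign (the w_3 pattern of the paper's cycle-8 expectation formula). -/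
open scoped Classical

/-- For seven independent entry-pairs
`(x₀,u₀), …, (x₆,u₆)` each with law `p`, the sum over all tuples with
`2x₀ + x₁ + x₂ − x₃ − x₄ − x₅ − x₆ = 0` and
`M ∣ (2u₀ + u₁ + u₂ − u₃ − u₄ − u₅ − u₆)`, of `∏ₑ p_{xₑ,uₑ}`, equals
`Σ_{M∣b}[f(X²,Y²) · f(X,Y)² · f(X⁻¹,Y⁻¹)⁴]_{0,b}` (the `w₃` cycle-8
pattern: exactly one entry traversed twice, both times with positive sign). -/
theorem cycle8_pattern_w3_activeness_probability (m M : ℕ) (hM : 1 ≤ M)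
    (p : Fin (m + 1) → Fin M → ℝ)
    (hp : ∀ i j, 0 ≤ p i j)
    (hsum : ∑ i : Fin (m + 1), ∑ j : Fin M, p i j = 1) :
    (∑ t ∈ Finset.univ.filter
        (fun t : Fin 7 → Fin (m + 1) × Fin M =>
          2 * ((t 0).1 : ℤ) + ((t 1).1 : ℤ) + ((t 2).1 : ℤ) - ((t 3).1 : ℤ)
            - ((t 4).1 : ℤ) - ((t 5).1 : ℤ) - ((t 6).1 : ℤ) = 0 ∧
          (M : ℤ) ∣ (2 * ((t 0).2 : ℤ) + ((t 1).2 : ℤ) + ((t 2).2 : ℤ)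
            - ((t 3).2 : ℤ) - ((t 4).2 : ℤ) - ((t 5).2 : ℤ) - ((t 6).2 : ℤ))),
        ∏ e : Fin 7, p (t e).1 (t e).2) =
    ∑ᶠ b ∈ {b : ℤ | (M : ℤ) ∣ b},
      (couplingPoly m M p 2 * couplingPoly m M p 1 ^ 2 *
        couplingPoly m M p (-1) ^ 4).coeff (0, b) := by
  classical
  set s : Fin 7 → ℤ := ![2, 1, 1, -1, -1, -1, -1] with hs
  have hs0 : s 0 = 2 := rfl
  have hs1 : s 1 = 1 := rfl
  have hs2 : s 2 = 1 := rfl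
  have hs3 : s 3 = -1 := rfl
  have hs4 : s 4 = -1 := rfl
  have hs5 : s 5 = -1 := rfl
  have hs6 : s 6 = -1 := rfl
  set A : (Fin 7 → Fin (m + 1) × Fin M) → ℤ × ℤ := fun t =>
    ∑ e : Fin 7, (s e * ((t e).1 : ℤ), s e * ((t e).2 : ℤ)) with hA
  set w : (Fin 7 → Fin (m + 1) × Fin M) → ℝ := fun t =>
    ∏ e : Fin 7, p (t e).1 (t e).2 with hw
  have hcp : ∀ c : ℤ, couplingPoly m M p c =
      ∑ x : Fin (m + 1) × Fin M,
        AddMonoidAlgebra.single (c * (x.1 : ℤ), c * (x.2 : ℤ)) (p x.1 x.2) := by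
    intro c
    rw [couplingPoly, Fintype.sum_prod_type]
  have hprod : couplingPoly m M p 2 * couplingPoly m M p 1 ^ 2 *
      couplingPoly m M p (-1) ^ 4 =
      ∑ t : Fin 7 → Fin (m + 1) × Fin M, AddMonoidAlgebra.single (A t) (w t) := by
    have h1 : couplingPoly m M p 2 * couplingPoly m M p 1 ^ 2 *
        couplingPoly m M p (-1) ^ 4 = ∏ e : Fin 7, couplingPoly m M p (s e) := by
      rw [Fin.prod_univ_seven]
      simp only [hs0, hs1, hs2, hs3, hs4, hs5, hs6]
      ring
    rw [h1]
    simp only [hcp]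
    rw [Finset.prod_univ_sum]
    rw [Fintype.piFinset_univ]
    refine Finset.sum_congr rfl fun t _ => ?_
    rw [AddMonoidAlgebra.prod_single]
  rw [hprod]
  have happ : ∀ b : ℤ,
      (∑ t : Fin 7 → Fin (m + 1) × Fin M, AddMonoidAlgebra.single (A t) (w t)).coeff (0, b)
        = ∑ t : Fin 7 → Fin (m + 1) × Fin M, (if A t = ((0 : ℤ), b) then w t else 0) := by
    intro b
    rw [AddMonoidAlgebra.coeff_sum, Finsupp.finset_sum_apply]
    exact Finset.sum_congr rfl fun t _ => AddMonoidAlgebra.coeff_single_apply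
  calc
    (∑ t ∈ Finset.univ.filter _, w t) = ∑ t : Fin 7 → Fin (m + 1) × Fin M,
        (if ((A t).1 = 0 ∧ (M : ℤ) ∣ (A t).2) then w t else 0) := by
      rw [Finset.sum_filter]
      refine Finset.sum_congr rfl fun t _ => ?_
      congr 1
      have h1 : (A t).1 = 2 * ((t 0).1 : ℤ) + ((t 1).1 : ℤ) + ((t 2).1 : ℤ) - ((t 3).1 : ℤ)
            - ((t 4).1 : ℤ) - ((t 5).1 : ℤ) - ((t 6).1 : ℤ) := by
        simp only [hA, Prod.fst_add, Prod.snd_add, Fin.sum_univ_seven, hs0, hs1, hs2, hs3, hs4, hs5, hs6]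
        ring
      have h2 : (A t).2 = 2 * ((t 0).2 : ℤ) + ((t 1).2 : ℤ) + ((t 2).2 : ℤ)
            - ((t 3).2 : ℤ) - ((t 4).2 : ℤ) - ((t 5).2 : ℤ) - ((t 6).2 : ℤ) := by
        simp only [hA, Prod.fst_add, Prod.snd_add, Fin.sum_univ_seven, hs0, hs1, hs2, hs3, hs4, hs5, hs6]
        ring
      rw [h1, h2]
    _ = ∑ t : Fin 7 → Fin (m + 1) × Fin M,
        ∑ᶠ b ∈ {b : ℤ | (M : ℤ) ∣ b}, (if A t = ((0 : ℤ), b) then w t else 0) := by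
      refine Finset.sum_congr rfl fun t _ => ?_
      rw [finsum_mem_def]
      rw [finsum_eq_single _ ((A t).2)]
      · simp only [Set.indicator_apply, Set.mem_setOf_eq, Prod.ext_iff]
        by_cases hd : (M : ℤ) ∣ (A t).2 <;> by_cases h0 : (A t).1 = 0 <;>
          simp [hd, h0]
      · intro b hb
        have : ¬ (A t = ((0 : ℤ), b)) := by
          intro h; apply hb; rw [h]
        simp [Set.indicator_apply, this]
    _ = ∑ᶠ b ∈ {b : ℤ | (M : ℤ) ∣ b},
        (∑ t : Fin 7 → Fin (m + 1) × Fin M, AddMonoidAlgebra.single (A t) (w t)).coeff (0, b) := by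
      simp only [happ, finsum_mem_def]
      have hind : ∀ b : ℤ,
          Set.indicator {b : ℤ | (M : ℤ) ∣ b}
            (fun b => ∑ t : Fin 7 → Fin (m + 1) × Fin M,
              (if A t = ((0 : ℤ), b) then w t else 0)) b
          = ∑ t : Fin 7 → Fin (m + 1) × Fin M,
            Set.indicator {b : ℤ | (M : ℤ) ∣ b}
              (fun b => if A t = ((0 : ℤ), b) then w t else 0) b := by
        intro b
        simp only [Set.indicator_apply]
        split_ifs with h
        · rfl
        · simp
      rw [finsum_congr hind]
      rw [← sum_finsum_comm]
      intro t _
      apply Set.Finite.subset (Set.finite_singleton ((A t).2))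
      intro b hb
      simp only [Function.mem_support, Set.indicator_apply, ne_eq] at hb
      rcases eq_or_ne b ((A t).2) with h | h
      · exact h
      · exfalso
        apply hb
        split_ifs with h1 h2
        · exact absurd (congrArg Prod.snd h2).symm h
        · rfl
        · rfl
end

section
/- Let p be a probability-distribution matrix and let k, l ≥ 2 be integers. Consider 2k + 2l − 2 independent entry-pairs valued in {0,…,m} × {0,…,M−1}, indexed by a disjoint union {e⁺, e⁻} ⊔ A⁺ ⊔ A⁻ ⊔ B⁺ ⊔ B⁻ with |A⁺| = |A⁻| = k−1 and |B⁺| = |B⁻| = l−1, each pair (x_e, u_e) drawn with law p. Then the probability that simultaneously (i) x_{e⁺} − x_{e⁻} + Σ_{e∈A⁺} x_e − Σ_{e∈A⁻} x_e = 0, (ii) M ∣ ( u_{e⁺} − u_{e⁻} + Σ_{e∈A⁺} u_e − Σ_{e∈A⁻} u_e ), (iii) x_{e⁺} − x_{e⁻} + Σ_{e∈B⁺} x_e − Σ_{e∈B⁻} x_e = 0, and (iv) M ∣ ( u_{e⁺} − u_{e⁻} + Σ_{e∈B⁺} u_e − Σ_{e∈B⁻} u_e ) equals P^𝒟_{2k,2l}(p)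 := Σ_{M∣b_1, M∣b_2} [ f(X_1X_2, Y_1Y_2) · f(X_1^{−1}X_2^{−1}, Y_1^{−1}Y_2^{−1}) · f(X_1,Y_1)^{k−1} · f(X_1^{−1},Y_1^{−1})^{k−1} · f(X_2,Y_2)^{l−1} · f(X_2^{−1},Y_2^{−1})^{l−1} ]_{0,0,b_1,b_2}. This is the probability that a dominant object pattern of the 2k-2l two-cycle-concatenation configuration remains active after random partitioning and relocations, and all dominant object pattern classes of this configuration share this characteristic polynomial. -/
open scoped Classical

/-- A monomial-substituted coupling polynomial in the four-variable Laurent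
polynomial ring (the group algebra over `ℝ` of `ℤ⁴`):
`couplingPoly4 p s₁ s₂ t₁ t₂ = Σ_{i,j} p_{i,j} X₁^{s₁·i} X₂^{s₂·i} Y₁^{t₁·j} Y₂^{t₂·j}`.
E.g. `couplingPoly4 p 1 1 1 1 = f(X₁X₂, Y₁Y₂)`,
`couplingPoly4 p 1 0 1 0 = f(X₁,Y₁)`,
`couplingPoly4 p (-1) 0 (-1) 0 = f(X₁⁻¹,Y₁⁻¹)`, etc. -/
noncomputable def couplingPoly4 (m M : ℕ) (p : Fin (m + 1) → Fin M → ℝ)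
    (s₁ s₂ t₁ t₂ : ℤ) : AddMonoidAlgebra ℝ (ℤ × ℤ × ℤ × ℤ) :=
  ∑ i : Fin (m + 1), ∑ j : Fin M,
    AddMonoidAlgebra.single
      (s₁ * (i : ℤ), s₂ * (i : ℤ), t₁ * (j : ℤ), t₂ * (j : ℤ)) (p i j)

namespace DomAux

variable {m M k l : ℕ}

abbrev Idx (k l : ℕ) := Fin 2 ⊕ ((Fin (k - 1) ⊕ Fin (k - 1)) ⊕ (Fin (l - 1) ⊕ Fin (l - 1)))

def sg (k l : ℕ) : Idx k l → ℤ × ℤ × ℤ × ℤ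
  | Sum.inl e => if e = 0 then (1, 1, 1, 1) else (-1, -1, -1, -1)
  | Sum.inr (Sum.inl (Sum.inl _)) => (1, 0, 1, 0)
  | Sum.inr (Sum.inl (Sum.inr _)) => (-1, 0, -1, 0)
  | Sum.inr (Sum.inr (Sum.inl _)) => (0, 1, 0, 1)
  | Sum.inr (Sum.inr (Sum.inr _)) => (0, -1, 0, -1)

def vmap (m M k l : ℕ) (e : Idx k l) (q : Fin (m + 1) × Fin M) : ℤ × ℤ × ℤ × ℤ :=
  ((sg k l e).1 * q.1, (sg k l e).2.1 * q.1, (sg k l e).2.2.1 * q.2, (sg k l e).2.2.2 * q.2)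

noncomputable def Sfun (m M k l : ℕ) (ω : Idx k l → Fin (m + 1) × Fin M) : ℤ × ℤ × ℤ × ℤ :=
  ∑ e, vmap m M k l e (ω e)

lemma coup_eq (p : Fin (m + 1) → Fin M → ℝ) (s₁ s₂ t₁ t₂ : ℤ) :
    couplingPoly4 m M p s₁ s₂ t₁ t₂ =
      ∑ q : Fin (m + 1) × Fin M,
        AddMonoidAlgebra.single (s₁ * (q.1 : ℤ), s₂ * (q.1 : ℤ), t₁ * (q.2 : ℤ), t₂ * (q.2 : ℤ))
          (p q.1 q.2) := by
  rw [couplingPoly4]; exact (Fintype.sum_prod_type (fun q : Fin (m + 1) × Fin M => AddMonoidAlgebra.single (s₁ * (q.1 : ℤ), s₂ * (q.1 : ℤ), t₁ * (q.2 : ℤ), t₂ * (q.2 : ℤ)) (p q.1 q.2))).symm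

lemma prod_eq (p : Fin (m + 1) → Fin M → ℝ) :
    (couplingPoly4 m M p 1 1 1 1 * couplingPoly4 m M p (-1) (-1) (-1) (-1) *
        couplingPoly4 m M p 1 0 1 0 ^ (k - 1) *
        couplingPoly4 m M p (-1) 0 (-1) 0 ^ (k - 1) *
        couplingPoly4 m M p 0 1 0 1 ^ (l - 1) *
        couplingPoly4 m M p 0 (-1) 0 (-1) ^ (l - 1)) =
      ∑ ω : Idx k l → Fin (m + 1) × Fin M,
        AddMonoidAlgebra.single (Sfun m M k l ω) (∏ e, p (ω e).1 (ω e).2) := by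
  have key : (∏ e : Idx k l, ∑ q : Fin (m + 1) × Fin M,
        AddMonoidAlgebra.single (vmap m M k l e q) (p q.1 q.2)) =
      ∑ ω : Idx k l → Fin (m + 1) × Fin M,
        AddMonoidAlgebra.single (Sfun m M k l ω) (∏ e, p (ω e).1 (ω e).2) := by
    rw [Fintype.prod_sum fun e q => AddMonoidAlgebra.single (vmap m M k l e q) (p q.1 q.2)]
    exact Finset.sum_congr rfl fun ω _ => AddMonoidAlgebra.prod_single _ _ _
  rw [← key, Fintype.prod_sum_type, Fintype.prod_sum_type, Fintype.prod_sum_type,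
    Fin.prod_univ_two]
  simp only [vmap, sg, if_pos rfl]
  norm_num [coup_eq, Finset.prod_const, mul_pow, mul_assoc]

lemma sum_components (f : Idx k l → ℤ × ℤ × ℤ × ℤ) :
    ∑ e, f e = (∑ e, (f e).1, ∑ e, (f e).2.1, ∑ e, (f e).2.2.1, ∑ e, (f e).2.2.2) := by
  simp [Prod.ext_iff, Prod.fst_sum, Prod.snd_sum]

lemma Sfun_eq (ω : Idx k l → Fin (m + 1) × Fin M) :
    Sfun m M k l ω =
      (((ω (Sum.inl 0)).1 : ℤ) - ((ω (Sum.inl 1)).1 : ℤ)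
          + (∑ a : Fin (k - 1), ((ω (Sum.inr (Sum.inl (Sum.inl a)))).1 : ℤ))
          - (∑ a : Fin (k - 1), ((ω (Sum.inr (Sum.inl (Sum.inr a)))).1 : ℤ)),
        ((ω (Sum.inl 0)).1 : ℤ) - ((ω (Sum.inl 1)).1 : ℤ)
          + (∑ a : Fin (l - 1), ((ω (Sum.inr (Sum.inr (Sum.inl a)))).1 : ℤ))
          - (∑ a : Fin (l - 1), ((ω (Sum.inr (Sum.inr (Sum.inr a)))).1 : ℤ)),
        ((ω (Sum.inl 0)).2 : ℤ) - ((ω (Sum.inl 1)).2 : ℤ)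
          + (∑ a : Fin (k - 1), ((ω (Sum.inr (Sum.inl (Sum.inl a)))).2 : ℤ))
          - (∑ a : Fin (k - 1), ((ω (Sum.inr (Sum.inl (Sum.inr a)))).2 : ℤ)),
        ((ω (Sum.inl 0)).2 : ℤ) - ((ω (Sum.inl 1)).2 : ℤ)
          + (∑ a : Fin (l - 1), ((ω (Sum.inr (Sum.inr (Sum.inl a)))).2 : ℤ))
          - (∑ a : Fin (l - 1), ((ω (Sum.inr (Sum.inr (Sum.inr a)))).2 : ℤ))) := by
  rw [Sfun, sum_components]
  refine Prod.ext ?_ (Prod.ext ?_ (Prod.ext ?_ ?_)) <;>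
    · simp [Fintype.sum_sum_type, Fin.sum_univ_two, vmap, sg, Finset.sum_neg_distrib]
      ring

lemma apply_eq (p : Fin (m + 1) → Fin M → ℝ) (x : ℤ × ℤ × ℤ × ℤ) :
    (couplingPoly4 m M p 1 1 1 1 * couplingPoly4 m M p (-1) (-1) (-1) (-1) *
        couplingPoly4 m M p 1 0 1 0 ^ (k - 1) *
        couplingPoly4 m M p (-1) 0 (-1) 0 ^ (k - 1) *
        couplingPoly4 m M p 0 1 0 1 ^ (l - 1) *
        couplingPoly4 m M p 0 (-1) 0 (-1) ^ (l - 1)).coeff x =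
      ∑ ω : Idx k l → Fin (m + 1) × Fin M,
        if Sfun m M k l ω = x then (∏ e, p (ω e).1 (ω e).2) else 0 := by
  rw [prod_eq, AddMonoidAlgebra.coeff_sum, Finsupp.finset_sum_apply]
  exact Finset.sum_congr rfl fun ω _ => by
    rw [AddMonoidAlgebra.coeff_single_apply]

end DomAux

set_option maxHeartbeats 1000000 in
/-- Consider `2k + 2l − 2` independent entry-pairs indexed
by `{e⁺, e⁻} ⊔ A⁺ ⊔ A⁻ ⊔ B⁺ ⊔ B⁻` with `|A⁺| = |A⁻| = k−1`,
`|B⁺| = |B⁻| = l−1`, each drawn with law `p`.  The probability that the two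
fundamental-cycle activeness conditions (partitioning and relocation, for
both the `2k`-cycle using `e⁺,e⁻,A⁺,A⁻` and the `2l`-cycle using
`e⁺,e⁻,B⁺,B⁻`) hold simultaneously equals
`P^𝒟_{2k,2l}(p) = Σ_{M∣b₁,M∣b₂}[ f(X₁X₂,Y₁Y₂) f(X₁⁻¹X₂⁻¹,Y₁⁻¹Y₂⁻¹)
  f(X₁,Y₁)^{k−1} f(X₁⁻¹,Y₁⁻¹)^{k−1} f(X₂,Y₂)^{l−1} f(X₂⁻¹,Y₂⁻¹)^{l−1} ]_{0,0,b₁,b₂}`,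
the activeness probability of a dominant object pattern of the
`2k`-`2l` two-cycle-concatenation configuration. -/
theorem dominant_pattern_activeness_probability (m M : ℕ) (hM : 1 ≤ M)
    (k l : ℕ) (hk : 2 ≤ k) (hl : 2 ≤ l)
    (p : Fin (m + 1) → Fin M → ℝ)
    (hp : ∀ i j, 0 ≤ p i j)
    (hsum : ∑ i : Fin (m + 1), ∑ j : Fin M, p i j = 1) :
    (∑ ω ∈ Finset.univ.filter
        (fun ω : Fin 2 ⊕ ((Fin (k - 1) ⊕ Fin (k - 1)) ⊕ (Fin (l - 1) ⊕ Fin (l - 1))) →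
              Fin (m + 1) × Fin M =>
          ((ω (Sum.inl 0)).1 : ℤ) - ((ω (Sum.inl 1)).1 : ℤ)
            + (∑ a : Fin (k - 1), ((ω (Sum.inr (Sum.inl (Sum.inl a)))).1 : ℤ))
            - (∑ a : Fin (k - 1), ((ω (Sum.inr (Sum.inl (Sum.inr a)))).1 : ℤ)) = 0 ∧
          (M : ℤ) ∣ (((ω (Sum.inl 0)).2 : ℤ) - ((ω (Sum.inl 1)).2 : ℤ)
            + (∑ a : Fin (k - 1), ((ω (Sum.inr (Sum.inl (Sum.inl a)))).2 : ℤ))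
            - (∑ a : Fin (k - 1), ((ω (Sum.inr (Sum.inl (Sum.inr a)))).2 : ℤ))) ∧
          ((ω (Sum.inl 0)).1 : ℤ) - ((ω (Sum.inl 1)).1 : ℤ)
            + (∑ a : Fin (l - 1), ((ω (Sum.inr (Sum.inr (Sum.inl a)))).1 : ℤ))
            - (∑ a : Fin (l - 1), ((ω (Sum.inr (Sum.inr (Sum.inr a)))).1 : ℤ)) = 0 ∧
          (M : ℤ) ∣ (((ω (Sum.inl 0)).2 : ℤ) - ((ω (Sum.inl 1)).2 : ℤ)
            + (∑ a : Fin (l - 1), ((ω (Sum.inr (Sum.inr (Sum.inl a)))).2 : ℤ))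
            - (∑ a : Fin (l - 1), ((ω (Sum.inr (Sum.inr (Sum.inr a)))).2 : ℤ)))),
        ∏ e, p (ω e).1 (ω e).2) =
    ∑ᶠ b ∈ {b : ℤ × ℤ | (M : ℤ) ∣ b.1 ∧ (M : ℤ) ∣ b.2},
      (couplingPoly4 m M p 1 1 1 1 * couplingPoly4 m M p (-1) (-1) (-1) (-1) *
        couplingPoly4 m M p 1 0 1 0 ^ (k - 1) *
        couplingPoly4 m M p (-1) 0 (-1) 0 ^ (k - 1) *
        couplingPoly4 m M p 0 1 0 1 ^ (l - 1) *
        couplingPoly4 m M p 0 (-1) 0 (-1) ^ (l - 1)).coeff (0, 0, b.1, b.2) := by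
  classical
  set Sf := DomAux.Sfun m M k l with hSf
  set W : (DomAux.Idx k l → Fin (m + 1) × Fin M) → ℝ :=
    fun ω => ∏ e, p (ω e).1 (ω e).2 with hW
  set s : Set (ℤ × ℤ) := {b : ℤ × ℤ | (M : ℤ) ∣ b.1 ∧ (M : ℤ) ∣ b.2} with hs
  set T : Finset (ℤ × ℤ) :=
    Finset.image (fun ω : DomAux.Idx k l → Fin (m + 1) × Fin M =>
      ((Sf ω).2.2.1, (Sf ω).2.2.2)) Finset.univ with hT
  set g : ℤ × ℤ → ℝ := fun b =>
    (couplingPoly4 m M p 1 1 1 1 * couplingPoly4 m M p (-1) (-1) (-1) (-1) *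
        couplingPoly4 m M p 1 0 1 0 ^ (k - 1) *
        couplingPoly4 m M p (-1) 0 (-1) 0 ^ (k - 1) *
        couplingPoly4 m M p 0 1 0 1 ^ (l - 1) *
        couplingPoly4 m M p 0 (-1) 0 (-1) ^ (l - 1)).coeff (0, 0, b.1, b.2) with hg
  have happ : ∀ b : ℤ × ℤ, g b = ∑ ω, if Sf ω = (0, 0, b.1, b.2) then W ω else 0 :=
    fun b => DomAux.apply_eq p _
  have hsupp : Function.support (Set.indicator s g) ⊆ ↑T := by
    intro b hb
    have hgb : g b ≠ 0 := by
      intro h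
      exact hb (by simp [Set.indicator, h])
    rw [happ] at hgb
    obtain ⟨ω, -, hω⟩ := Finset.exists_ne_zero_of_sum_ne_zero hgb
    have hSfω : Sf ω = (0, 0, b.1, b.2) := by
      by_contra hc; simp [hc] at hω
    refine Finset.mem_coe.2 (Finset.mem_image.2 ⟨ω, Finset.mem_univ ω, ?_⟩)
    rw [hSfω]
  rw [finsum_mem_def, finsum_eq_sum_of_support_subset _ hsupp]
  have step1 : ∑ b ∈ T, Set.indicator s g b =
      ∑ b ∈ T, ∑ ω : DomAux.Idx k l → Fin (m + 1) × Fin M,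
        if b ∈ s ∧ Sf ω = (0, 0, b.1, b.2) then W ω else 0 := by
    refine Finset.sum_congr rfl fun b _ => ?_
    rw [Set.indicator_apply]
    split_ifs with h
    · rw [happ]
      exact Finset.sum_congr rfl fun ω _ => by simp [h]
    · symm
      exact Finset.sum_eq_zero fun ω _ => by simp [h]
  rw [step1, Finset.sum_comm]
  have step2 : ∀ ω : DomAux.Idx k l → Fin (m + 1) × Fin M,
      (∑ b ∈ T, if b ∈ s ∧ Sf ω = (0, 0, b.1, b.2) then W ω else 0) =
      if ((Sf ω).1 = 0 ∧ (Sf ω).2.1 = 0 ∧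
          (M : ℤ) ∣ (Sf ω).2.2.1 ∧ (M : ℤ) ∣ (Sf ω).2.2.2) then W ω else 0 := by
    intro ω
    have hb₀ : ((Sf ω).2.2.1, (Sf ω).2.2.2) ∈ T :=
      Finset.mem_image_of_mem _ (Finset.mem_univ ω)
    have hzero : ∀ b ∈ T, b ≠ ((Sf ω).2.2.1, (Sf ω).2.2.2) →
        (if b ∈ s ∧ Sf ω = (0, 0, b.1, b.2) then W ω else 0) = 0 := by
      intro b _ hne
      apply if_neg
      rintro ⟨-, hSfb⟩
      exact hne (by rw [hSfb])
    rw [Finset.sum_eq_single_of_mem _ hb₀ hzero]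
    have hiff : (Sf ω = ((0 : ℤ), (0 : ℤ), (Sf ω).2.2.1, (Sf ω).2.2.2)) ↔
        ((Sf ω).1 = 0 ∧ (Sf ω).2.1 = 0) := by
      constructor
      · intro h
        exact ⟨by rw [h], by rw [h]⟩
      · rintro ⟨h1, h2⟩
        exact Prod.ext h1 (Prod.ext h2 rfl)
    have hmem : ((((Sf ω).2.2.1, (Sf ω).2.2.2) : ℤ × ℤ) ∈ s) ↔
        ((M : ℤ) ∣ (Sf ω).2.2.1 ∧ (M : ℤ) ∣ (Sf ω).2.2.2) := by
      simp only [hs, Set.mem_setOf_eq]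
    have key : ((((Sf ω).2.2.1, (Sf ω).2.2.2) : ℤ × ℤ) ∈ s ∧
          Sf ω = ((0 : ℤ), (0 : ℤ), (Sf ω).2.2.1, (Sf ω).2.2.2)) ↔
        ((Sf ω).1 = 0 ∧ (Sf ω).2.1 = 0 ∧
          (M : ℤ) ∣ (Sf ω).2.2.1 ∧ (M : ℤ) ∣ (Sf ω).2.2.2) := by
      rw [hmem, hiff]
      exact ⟨fun ⟨⟨d1, d2⟩, h1, h2⟩ => ⟨h1, h2, d1, d2⟩,
        fun ⟨h1, h2, d1, d2⟩ => ⟨⟨d1, d2⟩, h1, h2⟩⟩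
    exact if_congr key rfl rfl
  rw [Finset.sum_congr rfl fun ω _ => step2 ω, Finset.sum_filter]
  refine Finset.sum_congr rfl fun ω _ => ?_
  have hc : Sf ω = _ := DomAux.Sfun_eq ω
  refine if_congr ?_ rfl rfl
  rw [hc]
  exact ⟨fun ⟨a, b, c, d⟩ => ⟨a, c, b, d⟩, fun ⟨a, b, c, d⟩ => ⟨a, c, b, d⟩⟩
end
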